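/- There exist infinitely many normalised MSTD subsets of ℤ of size 16; that is, the collection of finite sets A ⊆ ℤ with |A| = 16, min A = 0, gcd of the elements of A equal to 1, and |A+A| > |A−A| is infinite. -/
import Mathlib


open Finset Pointwise

/-- A finite set of integers is normalised if its smallest element is `0` and
the gcd of its elements is `1`. -/
def IsNormalised (A : Finset ℤ) : Prop :=
  0 ∈ A ∧ (∀ a ∈ A, 0 ≤ a) ∧ A.gcd id = 1

/-- The base MSTD set `{0,2,3,4,7,11,12,14}`. -/
def A0 : Finset ℤ := {0,2,3,4,7,11,12,14}

lemma hb_add : ∀ x ∈ A0 + A0, 0 ≤ x ∧ x ≤ 28 := by decide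
lemma hb_sub : ∀ x ∈ A0 - A0, -14 ≤ x ∧ x ≤ 14 := by decide
lemma hcard_add : (A0 + A0).card = 26 := by decide
lemma hcard_sub : (A0 - A0).card = 25 := by decide
lemma hcard_A0 : A0.card = 8 := by decide
lemma hb_A0 : ∀ x ∈ A0, 0 ≤ x ∧ x ≤ 14 := by decide

lemma shift_mem {t x : ℤ} {S : Finset ℤ} (h : x ∈ ({t} : Finset ℤ) + S) :
    ∃ y ∈ S, x = t + y := by
  rw [mem_add] at h
  obtain ⟨a, ha, b, hb, hab⟩ := h
  rw [mem_singleton] at ha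
  exact ⟨b, hb, by omega⟩

lemma mem_shift {t y : ℤ} {S : Finset ℤ} (h : y ∈ S) : t + y ∈ ({t} : Finset ℤ) + S := by
  rw [mem_add]
  exact ⟨t, mem_singleton_self t, y, h, rfl⟩

lemma disj_of_lt {S T : Finset ℤ} {b c : ℤ} (hS : ∀ x ∈ S, x ≤ b)
    (hT : ∀ x ∈ T, c ≤ x) (h : b < c) : Disjoint S T := by
  rw [Finset.disjoint_left]
  intro x hx hx'
  have := hS x hx
  have := hT x hx'
  omega

lemma union_dedup1 (S T U : Finset ℤ) : (S ∪ T) ∪ (T ∪ U) = S ∪ (T ∪ U) := by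
  rw [union_assoc, ← union_assoc T T U, union_self]

lemma union_dedup2 (S T U : Finset ℤ) : (S ∪ T) ∪ (U ∪ S) = S ∪ (T ∪ U) := by
  rw [union_comm U S, ← union_assoc, union_assoc S T S, union_comm T S, ← union_assoc,
    union_self S, union_assoc]

lemma zero_shift (S : Finset ℤ) : ({(0 : ℤ)} : Finset ℤ) + S = S := by
  ext x
  simp [mem_add]

lemma expand (t s : ℤ) (X Y : Finset ℤ) :
    (X ∪ ({t} + X)) + (Y ∪ ({s} + Y)) =
    ((X + Y) ∪ ({s} + (X + Y))) ∪ (({t} + (X + Y)) ∪ ({t + s} + (X + Y))) := by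
  rw [union_add, add_union, add_union]
  congr 1
  · congr 1
    rw [← add_assoc, add_comm X ({s} : Finset ℤ), add_assoc]
  · congr 1
    · rw [add_assoc]
    · rw [add_assoc, ← add_assoc X, add_comm X ({s} : Finset ℤ), add_assoc ({s} : Finset ℤ) X Y,
        ← add_assoc, singleton_add_singleton]

/-- The family of 16-element MSTD sets: `A0 ∪ (t + A0)`. -/
def Bf (t : ℤ) : Finset ℤ := A0 ∪ ({t} + A0)

lemma card_union3 {S T U : Finset ℤ} (h1 : Disjoint S (T ∪ U)) (h2 : Disjoint T U) :
    (S ∪ (T ∪ U)).card = S.card + T.card + U.card := by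
  rw [card_union_of_disjoint h1, card_union_of_disjoint h2]
  ring

lemma shift_le {t b : ℤ} {S : Finset ℤ} (hS : ∀ y ∈ S, y ≤ b) :
    ∀ x ∈ ({t} : Finset ℤ) + S, x ≤ t + b := by
  intro x hx
  obtain ⟨y, hy, rfl⟩ := shift_mem hx
  have := hS y hy
  omega

lemma le_shift {t a : ℤ} {S : Finset ℤ} (hS : ∀ y ∈ S, a ≤ y) :
    ∀ x ∈ ({t} : Finset ℤ) + S, t + a ≤ x := by
  intro x hx
  obtain ⟨y, hy, rfl⟩ := shift_mem hx
  have := hS y hy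
  omega

lemma Bf_add (t : ℤ) (ht : 29 ≤ t) : ((Bf t) + (Bf t)).card = 78 := by
  have h := expand t t A0 A0
  have hre := union_dedup1 (A0 + A0) ({t} + (A0 + A0)) ({t + t} + (A0 + A0))
  rw [Bf, h, hre, card_union3, card_singleton_add, card_singleton_add, hcard_add]
  · rw [disjoint_union_right]
    exact ⟨disj_of_lt (fun x hx => (hb_add x hx).2) (le_shift (fun y hy => (hb_add y hy).1))
        (by omega),
      disj_of_lt (fun x hx => (hb_add x hx).2) (le_shift (fun y hy => (hb_add y hy).1))
        (by omega)⟩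
  · exact disj_of_lt (shift_le (fun y hy => (hb_add y hy).2))
      (le_shift (fun y hy => (hb_add y hy).1)) (by omega)

lemma neg_union' (s t : Finset ℤ) : -(s ∪ t) = -s ∪ -t := by ext x; simp [mem_neg]

lemma neg_shift (t : ℤ) (S : Finset ℤ) : -({t} + S) = {-t} + (-S) := by
  simp [neg_add_rev, add_comm]

lemma Bf_sub (t : ℤ) (ht : 29 ≤ t) : ((Bf t) - (Bf t)).card = 75 := by
  have hneg : -(Bf t) = (-A0) ∪ ({-t} + (-A0)) := by
    rw [Bf, neg_union', neg_shift]
  have h := expand t (-t) A0 (-A0)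
  have hD : A0 + -A0 = A0 - A0 := (sub_eq_add_neg A0 A0).symm
  have h0 : ({t + -t} : Finset ℤ) + (A0 - A0) = A0 - A0 := by
    rw [add_neg_cancel, zero_shift]
  rw [sub_eq_add_neg, hneg, Bf, h, hD, h0]
  have hre := union_dedup2 (A0 - A0) ({-t} + (A0 - A0)) ({t} + (A0 - A0))
  rw [hre, card_union3, card_singleton_add, card_singleton_add, hcard_sub]
  · rw [disjoint_union_right]
    exact ⟨(disj_of_lt (shift_le (fun y hy => (hb_sub y hy).2))
        (fun x hx => (hb_sub x hx).1) (by omega)).symm,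
      disj_of_lt (fun x hx => (hb_sub x hx).2) (le_shift (fun y hy => (hb_sub y hy).1))
        (by omega)⟩
  · exact disj_of_lt (shift_le (fun y hy => (hb_sub y hy).2))
      (le_shift (fun y hy => (hb_sub y hy).1)) (by omega)

lemma Bf_card (t : ℤ) (ht : 29 ≤ t) : (Bf t).card = 16 := by
  rw [Bf, card_union_of_disjoint, card_singleton_add, hcard_A0]
  exact disj_of_lt (fun x hx => (hb_A0 x hx).2) (le_shift (fun y hy => (hb_A0 y hy).1))
    (by omega)

lemma Bf_le (t : ℤ) (ht : 0 ≤ t) : ∀ x ∈ Bf t, x ≤ t + 14 := by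
  intro x hx
  rw [Bf, mem_union] at hx
  rcases hx with hx | hx
  · have := hb_A0 x hx; omega
  · exact shift_le (fun y hy => (hb_A0 y hy).2) x hx

lemma Bf_normalised (t : ℤ) (ht : 29 ≤ t) : IsNormalised (Bf t) := by
  refine ⟨mem_union_left _ (by decide), ?_, ?_⟩
  · intro a ha
    rw [Bf, mem_union] at ha
    rcases ha with ha | ha
    · exact (hb_A0 a ha).1
    · have := le_shift (fun y hy => (hb_A0 y hy).1) a ha; omega
  · have h2 : (2 : ℤ) ∈ Bf t := mem_union_left _ (by decide)
    have h3 : (3 : ℤ) ∈ Bf t := mem_union_left _ (by decide)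
    have d2 : (Bf t).gcd id ∣ 2 := Finset.gcd_dvd h2
    have d3 : (Bf t).gcd id ∣ 3 := Finset.gcd_dvd h3
    have d1 : (Bf t).gcd id ∣ 1 := by
      have := dvd_sub d3 d2
      simpa using this
    have hu : IsUnit ((Bf t).gcd id) := isUnit_of_dvd_one d1
    calc (Bf t).gcd id = normalize ((Bf t).gcd id) := (Finset.normalize_gcd).symm
      _ = 1 := normalize_eq_one.mpr hu

/-- There are infinitely many normalised MSTD subsets of ℤ of size 16. -/
theorem infinitely_many_normalised_mstd_of_card_sixteen :
    Set.Infinite {A : Finset ℤ |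
      A.card = 16 ∧ IsNormalised A ∧ (A - A).card < (A + A).card} := by
  apply Set.infinite_of_injective_forall_mem
    (f := fun n : ℕ => Bf (29 + n))
  case hi =>
    intro m n hmn
    simp only at hmn
    have hm : (29 + (m : ℤ)) + 14 ∈ Bf (29 + n) := by
      rw [← hmn, Bf]
      exact mem_union_right _ (mem_shift (by decide))
    have hn : (29 + (n : ℤ)) + 14 ∈ Bf (29 + m) := by
      rw [hmn, Bf]
      exact mem_union_right _ (mem_shift (by decide))
    have h1 := Bf_le (29 + n) (by omega) _ hm
    have h2 := Bf_le (29 + m) (by omega) _ hn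
    omega
  case hf =>
    intro n
    have ht : (29 : ℤ) ≤ 29 + n := by omega
    refine ⟨Bf_card _ ht, Bf_normalised _ ht, ?_⟩
    rw [Bf_add _ ht, Bf_sub _ ht]
    omega
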